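/- arXiv:1408.1693 — 2 statements merged into one kernel-verified Lean document; each statement's English description precedes it below -/
import Mathlib

section
/- Let A and B be real symmetric positive definite n×n matrices with A ⪯ B ⪯ κ·A for some κ ≥ 2, let R = I − B^{−1}A, let ν ∈ (0, 1/(2κ)), let x_0 ∈ ℝⁿ, and let (x_i)_{i≥0} be a ν-approximate power sequence for R in the B-norm starting at x_0. Then for every l ∈ ℕ: | Σ_{i=1}^l (1/i)·x_0ᵀ R^i x_0 − Σ_{i=1}^l (1/i)·x_0ᵀ x_i | ≤ 4·ν·κ²·√(κ(B))·‖x_0‖², where ‖x_0‖ is the Euclidean norm and κ(B) = λ_max(B)/λ_min(B) is the condition number of B. -/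
set_option maxHeartbeats 1000000

open Matrix

/-- The `B`-norm `‖x‖_B = √(xᵀ B x)` on `ℝⁿ`. -/
noncomputable def vecBNorm {n : ℕ} (B : Matrix (Fin n) (Fin n) ℝ) (x : Fin n → ℝ) : ℝ :=
  Real.sqrt (x ⬝ᵥ B.mulVec x)

/-- Condition number `λ_max / λ_min` of a Hermitian real matrix. -/
noncomputable def condNumber {n : ℕ} (B : Matrix (Fin n) (Fin n) ℝ) (hB : B.IsHermitian) : ℝ :=
  (⨆ i, hB.eigenvalues i) / (⨅ i, hB.eigenvalues i)

namespace MartinAux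

noncomputable def bsng {n : ℕ} {B : Matrix (Fin n) (Fin n) ℝ} (hB : B.PosDef) :
    SeminormedAddCommGroup (Fin n → ℝ) :=
  Matrix.toSeminormedAddCommGroup B hB.posSemidef

noncomputable def bips {n : ℕ} {B : Matrix (Fin n) (Fin n) ℝ} (hB : B.PosDef) :
    @InnerProductSpace ℝ (Fin n → ℝ) _ (bsng hB) :=
  Matrix.toInnerProductSpace B hB.posSemidef

variable {n : ℕ} {A B : Matrix (Fin n) (Fin n) ℝ}

lemma vecBNorm_eq (hB : B.PosDef) (w : Fin n → ℝ) :
    vecBNorm B w = @norm _ (bsng hB).toNorm w := by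
  unfold vecBNorm; rw [dotProduct_comm]; rfl

lemma inner_eq (hB : B.PosDef) (u v : Fin n → ℝ) :
    u ⬝ᵥ B.mulVec v = @inner ℝ _ (bips hB).toInner u v := by
  rw [dotProduct_comm]; rfl

lemma vecBNorm_add_le (hB : B.PosDef) (u v : Fin n → ℝ) :
    vecBNorm B (u + v) ≤ vecBNorm B u + vecBNorm B v := by
  rw [vecBNorm_eq hB, vecBNorm_eq hB, vecBNorm_eq hB]
  exact @norm_add_le _ (bsng hB).toSeminormedAddGroup u v

lemma vecBNorm_cs (hB : B.PosDef) (u v : Fin n → ℝ) :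
    |u ⬝ᵥ B.mulVec v| ≤ vecBNorm B u * vecBNorm B v := by
  rw [vecBNorm_eq hB, vecBNorm_eq hB, inner_eq hB]
  exact @abs_real_inner_le_norm _ (bsng hB) (bips hB) u v

lemma psd_quad {M : Matrix (Fin n) (Fin n) ℝ} (h : M.PosSemidef) (x : Fin n → ℝ) :
    0 ≤ x ⬝ᵥ M.mulVec x := by simpa using h.dotProduct_mulVec_nonneg x

lemma conj_diag_psd (hH : B.IsHermitian) (g : Fin n → ℝ) (hg : ∀ i, 0 ≤ g i) :
    ((hH.eigenvectorUnitary : Matrix (Fin n) (Fin n) ℝ) * diagonal g *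
      (star hH.eigenvectorUnitary : Matrix (Fin n) (Fin n) ℝ)).PosSemidef := by
  have hd : (diagonal g).PosSemidef := posSemidef_diagonal_iff.mpr hg
  have := hd.mul_mul_conjTranspose_same (hH.eigenvectorUnitary : Matrix (Fin n) (Fin n) ℝ)
  simpa [star_eq_conjTranspose] using this

lemma smul_one_sub_eq (hH : B.IsHermitian) (c : ℝ) :
    c • (1 : Matrix (Fin n) (Fin n) ℝ) - B =
      (hH.eigenvectorUnitary : Matrix (Fin n) (Fin n) ℝ) *
        diagonal (fun i => c - hH.eigenvalues i) *
        (star hH.eigenvectorUnitary : Matrix (Fin n) (Fin n) ℝ) := by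
  have hU : (hH.eigenvectorUnitary : Matrix (Fin n) (Fin n) ℝ) *
      (star hH.eigenvectorUnitary : Matrix (Fin n) (Fin n) ℝ) = 1 :=
    Unitary.mul_star_self_of_mem hH.eigenvectorUnitary.2
  have hd : (diagonal (fun i => c - hH.eigenvalues i) : Matrix (Fin n) (Fin n) ℝ)
      = c • 1 - diagonal (RCLike.ofReal ∘ hH.eigenvalues) := by
    simp [diagonal_sub, smul_eq_diagonal_mul]
  have hs := hH.spectral_theorem
  rw [Unitary.conjStarAlgAut_apply] at hs
  rw [hd, Matrix.mul_sub, Matrix.sub_mul, ← hs]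
  congr 1
  rw [Matrix.mul_smul, Matrix.mul_one, Matrix.smul_mul, hU]

lemma quad_le_sup (hH : B.IsHermitian) (x : Fin n → ℝ) :
    x ⬝ᵥ B.mulVec x ≤ (⨆ i, hH.eigenvalues i) * (x ⬝ᵥ x) := by
  have hpsd : ((⨆ i, hH.eigenvalues i) • (1 : Matrix (Fin n) (Fin n) ℝ) - B).PosSemidef := by
    rw [smul_one_sub_eq hH]
    exact conj_diag_psd hH _ (fun i => sub_nonneg.2 (le_ciSup (Set.Finite.bddAbove
      (Set.finite_range _)) i))
  have := psd_quad hpsd x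
  simp only [Matrix.sub_mulVec, Matrix.smul_mulVec, Matrix.one_mulVec,
    dotProduct_sub, dotProduct_smul, smul_eq_mul] at this
  linarith

lemma smul_one_sub_conj (hH : B.IsHermitian) (c : ℝ) (f : Fin n → ℝ) :
    c • (1 : Matrix (Fin n) (Fin n) ℝ) -
      ((hH.eigenvectorUnitary : Matrix (Fin n) (Fin n) ℝ) * diagonal f *
        (star hH.eigenvectorUnitary : Matrix (Fin n) (Fin n) ℝ)) =
    (hH.eigenvectorUnitary : Matrix (Fin n) (Fin n) ℝ) * diagonal (fun i => c - f i) *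
      (star hH.eigenvectorUnitary : Matrix (Fin n) (Fin n) ℝ) := by
  have hU : (hH.eigenvectorUnitary : Matrix (Fin n) (Fin n) ℝ) *
      (star hH.eigenvectorUnitary : Matrix (Fin n) (Fin n) ℝ) = 1 :=
    Unitary.mul_star_self_of_mem hH.eigenvectorUnitary.2
  have hd : (diagonal (fun i => c - f i) : Matrix (Fin n) (Fin n) ℝ)
      = c • 1 - diagonal f := by
    simp [diagonal_sub, smul_eq_diagonal_mul]
  rw [hd, Matrix.mul_sub, Matrix.sub_mul]
  congr 1
  rw [Matrix.mul_smul, Matrix.mul_one, Matrix.smul_mul, hU]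

lemma inv_rep (hB : B.PosDef) :
    B⁻¹ = (hB.1.eigenvectorUnitary : Matrix (Fin n) (Fin n) ℝ) *
      diagonal (fun i => (hB.1.eigenvalues i)⁻¹) *
      (star hB.1.eigenvectorUnitary : Matrix (Fin n) (Fin n) ℝ) := by
  have hU' : (star hB.1.eigenvectorUnitary : Matrix (Fin n) (Fin n) ℝ) *
      (hB.1.eigenvectorUnitary : Matrix (Fin n) (Fin n) ℝ) = 1 :=
    Unitary.star_mul_self_of_mem hB.1.eigenvectorUnitary.2
  have hU : (hB.1.eigenvectorUnitary : Matrix (Fin n) (Fin n) ℝ) *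
      (star hB.1.eigenvectorUnitary : Matrix (Fin n) (Fin n) ℝ) = 1 :=
    Unitary.mul_star_self_of_mem hB.1.eigenvectorUnitary.2
  have hone : (fun i => (hB.1.eigenvalues i)⁻¹ * (RCLike.ofReal ∘ hB.1.eigenvalues) i)
      = fun _ => (1:ℝ) := by
    funext i
    simp [inv_mul_cancel₀ (hB.eigenvalues_pos i).ne']
  apply Matrix.inv_eq_left_inv
  calc (hB.1.eigenvectorUnitary : Matrix (Fin n) (Fin n) ℝ) *
      diagonal (fun i => (hB.1.eigenvalues i)⁻¹) *
      (star hB.1.eigenvectorUnitary : Matrix (Fin n) (Fin n) ℝ) * B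
      = (hB.1.eigenvectorUnitary : Matrix (Fin n) (Fin n) ℝ) *
        diagonal (fun i => (hB.1.eigenvalues i)⁻¹) *
        (star hB.1.eigenvectorUnitary : Matrix (Fin n) (Fin n) ℝ) *
        ((hB.1.eigenvectorUnitary : Matrix (Fin n) (Fin n) ℝ) *
          diagonal (RCLike.ofReal ∘ hB.1.eigenvalues) *
          (star hB.1.eigenvectorUnitary : Matrix (Fin n) (Fin n) ℝ)) := by
        have hs := hB.1.spectral_theorem
        rw [Unitary.conjStarAlgAut_apply] at hs
        rw [← hs]
    _ = 1 := by
        simp only [Matrix.mul_assoc]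
        rw [← Matrix.mul_assoc (star (hB.1.eigenvectorUnitary : Matrix (Fin n) (Fin n) ℝ))
          (hB.1.eigenvectorUnitary : Matrix (Fin n) (Fin n) ℝ), hU', Matrix.one_mul,
          ← Matrix.mul_assoc (diagonal _) (diagonal _), diagonal_mul_diagonal, hone,
          diagonal_one, Matrix.one_mul, hU]

lemma inf_eig_pos (hn : 0 < n) (hB : B.PosDef) : 0 < ⨅ i, hB.1.eigenvalues i := by
  haveI : Nonempty (Fin n) := ⟨⟨0, hn⟩⟩
  obtain ⟨i, hi⟩ := exists_eq_ciInf_of_finite (f := hB.1.eigenvalues)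
  rw [← hi]
  exact hB.eigenvalues_pos i

lemma quad_inv_le (hn : 0 < n) (hB : B.PosDef) (x : Fin n → ℝ) :
    x ⬝ᵥ B⁻¹.mulVec x ≤ (⨅ i, hB.1.eigenvalues i)⁻¹ * (x ⬝ᵥ x) := by
  haveI : Nonempty (Fin n) := ⟨⟨0, hn⟩⟩
  have hinf := inf_eig_pos hn hB
  have hpsd : ((⨅ i, hB.1.eigenvalues i)⁻¹ • (1 : Matrix (Fin n) (Fin n) ℝ) - B⁻¹).PosSemidef := by
    rw [inv_rep hB, smul_one_sub_conj hB.1]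
    refine conj_diag_psd hB.1 _ (fun i => sub_nonneg.2 ?_)
    exact inv_anti₀ hinf (ciInf_le (Set.Finite.bddBelow (Set.finite_range _)) i)
  have := psd_quad hpsd x
  simp only [Matrix.sub_mulVec, Matrix.smul_mulVec, Matrix.one_mulVec,
    dotProduct_sub, dotProduct_smul, smul_eq_mul] at this
  linarith

lemma psd_smul {M : Matrix (Fin n) (Fin n) ℝ} (h : M.PosSemidef) {c : ℝ} (hc : 0 ≤ c) :
    (c • M).PosSemidef := by
  refine Matrix.PosSemidef.of_dotProduct_mulVec_nonneg ?_ (fun x => ?_)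
  · show (c • M)ᴴ = c • M
    rw [Matrix.conjTranspose_smul, star_trivial, h.1]
  · have h2 : (0:ℝ) ≤ x ⬝ᵥ M.mulVec x := by simpa using h.dotProduct_mulVec_nonneg x
    simpa [Matrix.smul_mulVec, dotProduct_smul] using mul_nonneg hc h2

open scoped MatrixOrder in
lemma contraction_quad (hA : A.PosDef) (hB : B.PosDef) {κ : ℝ} (hκ : 2 ≤ κ)
    (hAB : (B - A).PosSemidef) (hBA : (κ • A - B).PosSemidef) (y : Fin n → ℝ) :
    ((1 - B⁻¹ * A).mulVec y) ⬝ᵥ B.mulVec ((1 - B⁻¹ * A).mulVec y)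
      ≤ (1 - κ⁻¹)^2 * (y ⬝ᵥ B.mulVec y) := by
  have hκ0 : (0:ℝ) < κ := by linarith
  set ρ : ℝ := 1 - κ⁻¹ with hρdef
  set Q : Matrix (Fin n) (Fin n) ℝ := CFC.sqrt B with hQdef
  have hQ : Q.PosSemidef := nonneg_iff_posSemidef.mp (CFC.sqrt_nonneg B)
  have hQQ : Q * Q = B := CFC.sqrt_mul_sqrt_self B (nonneg_iff_posSemidef.mpr hB.posSemidef)
  have hdetQ : IsUnit Q.det := by
    have h1 : Q.det * Q.det = B.det := by rw [← det_mul, hQQ]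
    have h2 : (0:ℝ) < B.det := hB.det_pos
    have : Q.det ≠ 0 := by intro h; rw [h, mul_zero] at h1; linarith
    exact this.isUnit
  set T : Matrix (Fin n) (Fin n) ℝ := Q⁻¹ with hTdef
  have hQT : Q * T = 1 := Matrix.mul_nonsing_inv Q hdetQ
  have hTQ : T * Q = 1 := Matrix.nonsing_inv_mul Q hdetQ
  have hTH : Tᴴ = T := by rw [hTdef, Matrix.conjTranspose_nonsing_inv, hQ.1]
  have hTT : T * T = B⁻¹ := by rw [hTdef, ← Matrix.mul_inv_rev, hQQ]
  set S : Matrix (Fin n) (Fin n) ℝ := T * (B - A) * T with hSdef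
  have hS : S.PosSemidef := by
    have := hAB.mul_mul_conjTranspose_same T
    rwa [hTH] at this
  clear_value S
  have hTBT : T * B * T = 1 := by
    rw [← hQQ, ← Matrix.mul_assoc T Q Q, hTQ, Matrix.one_mul, hQT]
  have hTAT : T * A * T = 1 - S := by
    have h1 : A = B - (B - A) := by abel
    rw [h1, Matrix.mul_sub, Matrix.sub_mul, hTBT, hSdef]
  have hrs : ρ • (1 : Matrix (Fin n) (Fin n) ℝ) - S = T * (A - κ⁻¹ • B) * T := by
    rw [Matrix.mul_sub, Matrix.sub_mul, hTAT]
    rw [Matrix.mul_smul, Matrix.smul_mul, hTBT]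
    rw [hρdef, sub_smul, one_smul]
    abel
  have hAκB : (A - κ⁻¹ • B).PosSemidef := by
    have h1 : A - κ⁻¹ • B = κ⁻¹ • (κ • A - B) := by
      rw [smul_sub, smul_smul, inv_mul_cancel₀ hκ0.ne', one_smul]
    rw [h1]
    exact psd_smul hBA (by positivity)
  have hρS : (ρ • (1 : Matrix (Fin n) (Fin n) ℝ) - S).PosSemidef := by
    rw [hrs]
    have := hAκB.mul_mul_conjTranspose_same T
    rwa [hTH] at this
  have hρ0 : (0:ℝ) ≤ ρ := by
    have h1 : κ⁻¹ ≤ 2⁻¹ := inv_anti₀ (by norm_num) hκ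
    rw [hρdef]
    norm_num at h1 ⊢
    linarith
  set P : Matrix (Fin n) (Fin n) ℝ := CFC.sqrt S with hPdef
  have hP : P.PosSemidef := nonneg_iff_posSemidef.mp (CFC.sqrt_nonneg S)
  have hPP : P * P = S := CFC.sqrt_mul_sqrt_self S (nonneg_iff_posSemidef.mpr hS)
  clear_value P
  have hPSP2 : P * S * P = S * S := by
    conv_lhs => rw [← hPP]
    rw [← Matrix.mul_assoc, Matrix.mul_assoc (P*P) P P, hPP]
  have hPSP : P * (ρ • (1 : Matrix (Fin n) (Fin n) ℝ) - S) * P = ρ • S - S * S := by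
    rw [Matrix.mul_sub, Matrix.sub_mul, Matrix.mul_smul, Matrix.mul_one, Matrix.smul_mul, hPP,
      hPSP2]
  have hkey : (ρ^2 • (1 : Matrix (Fin n) (Fin n) ℝ) - S * S).PosSemidef := by
    have hid : ρ^2 • (1 : Matrix (Fin n) (Fin n) ℝ) - S * S
        = ρ • (ρ • (1 : Matrix (Fin n) (Fin n) ℝ) - S)
          + P * (ρ • (1 : Matrix (Fin n) (Fin n) ℝ) - S) * P := by
      rw [pow_two, hPSP, smul_sub, smul_smul]
      abel
    rw [hid]
    refine Matrix.PosSemidef.add (psd_smul hρS hρ0) ?_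
    have := hρS.mul_mul_conjTranspose_same P
    rwa [hP.1] at this
  have hSS : S * S = T * ((B - A) * B⁻¹ * (B - A)) * T := by
    rw [hSdef]
    simp only [Matrix.mul_assoc]
    rw [← Matrix.mul_assoc T T, hTT]
  have hM : ρ^2 • B - (B - A) * B⁻¹ * (B - A)
      = Q * (ρ^2 • (1 : Matrix (Fin n) (Fin n) ℝ) - S * S) * Qᴴ := by
    have h1 : Q * (ρ^2 • (1 : Matrix (Fin n) (Fin n) ℝ)) * Q = ρ^2 • B := by
      rw [Matrix.mul_smul, Matrix.mul_one, Matrix.smul_mul, hQQ]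
    have h2 : Q * (S * S) * Q = (B - A) * B⁻¹ * (B - A) := by
      rw [hSS]
      simp only [Matrix.mul_assoc]
      rw [hTQ, Matrix.mul_one, ← Matrix.mul_assoc Q T, hQT, Matrix.one_mul]
    have h3 : Q * (ρ^2 • (1 : Matrix (Fin n) (Fin n) ℝ) - S * S) * Q
        = Q * (ρ^2 • (1 : Matrix (Fin n) (Fin n) ℝ)) * Q - Q * (S * S) * Q := by
      rw [Matrix.mul_sub Q, Matrix.sub_mul]
    rw [hQ.1, h3, h1, h2]
  have hMpsd : (ρ^2 • B - (B - A) * B⁻¹ * (B - A)).PosSemidef := by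
    rw [hM]
    exact hkey.mul_mul_conjTranspose_same Q
  have hBdet : IsUnit B.det := hB.isUnit.map detMonoidHom
  have hquad : ((1 - B⁻¹ * A).mulVec y) ⬝ᵥ B.mulVec ((1 - B⁻¹ * A).mulVec y)
      = y ⬝ᵥ ((B - A) * B⁻¹ * (B - A)).mulVec y := by
    have hBR : B * (1 - B⁻¹ * A) = B - A := by
      rw [Matrix.mul_sub, Matrix.mul_one, ← Matrix.mul_assoc, Matrix.mul_nonsing_inv B hBdet,
        Matrix.one_mul]
    have hRt : (1 - B⁻¹ * A)ᵀ * (B - A) = (B - A) * B⁻¹ * (B - A) := by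
      have hAt : Aᵀ = A := by
        rw [← Matrix.conjTranspose_eq_transpose_of_trivial, hA.1.eq]
      have hBit : (B⁻¹)ᵀ = B⁻¹ := by
        rw [Matrix.transpose_nonsing_inv, ← Matrix.conjTranspose_eq_transpose_of_trivial, hB.1.eq]
      rw [Matrix.transpose_sub, Matrix.transpose_one, Matrix.transpose_mul, hAt, hBit]
      have hS1 : (B - A) * B⁻¹ = 1 - A * B⁻¹ := by
        rw [Matrix.sub_mul, Matrix.mul_nonsing_inv B hBdet]
      rw [hS1]
    calc ((1 - B⁻¹ * A).mulVec y) ⬝ᵥ B.mulVec ((1 - B⁻¹ * A).mulVec y)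
        = ((1 - B⁻¹ * A).mulVec y) ⬝ᵥ (B * (1 - B⁻¹ * A)).mulVec y := by
          rw [← Matrix.mulVec_mulVec]
      _ = y ⬝ᵥ ((1 - B⁻¹ * A)ᵀ * (B - A)).mulVec y := by
          rw [hBR, ← Matrix.mulVec_mulVec, dotProduct_comm, dotProduct_mulVec,
            ← Matrix.mulVec_transpose, dotProduct_comm, Matrix.mulVec_mulVec]
      _ = y ⬝ᵥ ((B - A) * B⁻¹ * (B - A)).mulVec y := by rw [hRt]
  rw [hquad]
  have h2 := hMpsd.dotProduct_mulVec_nonneg y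
  simp only [Matrix.sub_mulVec, Matrix.smul_mulVec, dotProduct_sub, dotProduct_smul,
    smul_eq_mul, star_trivial, RCLike.re_to_real] at h2
  linarith

lemma vecBNorm_contract (hA : A.PosDef) (hB : B.PosDef) {κ : ℝ} (hκ : 2 ≤ κ)
    (hAB : (B - A).PosSemidef) (hBA : (κ • A - B).PosSemidef) (y : Fin n → ℝ) :
    vecBNorm B ((1 - B⁻¹ * A).mulVec y) ≤ (1 - κ⁻¹) * vecBNorm B y := by
  have hρ0 : (0:ℝ) ≤ 1 - κ⁻¹ := by
    have h1 : κ⁻¹ ≤ 2⁻¹ := inv_anti₀ (by norm_num) hκ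
    norm_num at h1 ⊢
    linarith
  have h := contraction_quad hA hB hκ hAB hBA y
  have h2 : Real.sqrt (((1 - B⁻¹ * A).mulVec y) ⬝ᵥ B.mulVec ((1 - B⁻¹ * A).mulVec y))
      ≤ Real.sqrt ((1 - κ⁻¹)^2 * (y ⬝ᵥ B.mulVec y)) := Real.sqrt_le_sqrt h
  rw [Real.sqrt_mul (sq_nonneg _), Real.sqrt_sq hρ0] at h2
  exact h2

lemma mulVec_dot (M : Matrix (Fin n) (Fin n) ℝ) (u w : Fin n → ℝ) :
    (M.mulVec u) ⬝ᵥ w = u ⬝ᵥ (Mᵀ.mulVec w) := by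
  symm
  rw [Matrix.dotProduct_mulVec, Matrix.vecMul_transpose]

lemma mixed_cs (hB : B.PosDef) (u v : Fin n → ℝ) :
    |u ⬝ᵥ v| ≤ Real.sqrt (u ⬝ᵥ B⁻¹.mulVec u) * vecBNorm B v := by
  have hBdet : IsUnit B.det := hB.isUnit.map detMonoidHom
  have hBit : (B⁻¹)ᵀ = B⁻¹ := by
    rw [Matrix.transpose_nonsing_inv, ← Matrix.conjTranspose_eq_transpose_of_trivial, hB.1.eq]
  have key : u ⬝ᵥ v = (B⁻¹.mulVec u) ⬝ᵥ B.mulVec v := by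
    rw [mulVec_dot, hBit, Matrix.mulVec_mulVec, Matrix.nonsing_inv_mul B hBdet,
      Matrix.one_mulVec]
  have hnorm : vecBNorm B (B⁻¹.mulVec u) = Real.sqrt (u ⬝ᵥ B⁻¹.mulVec u) := by
    show Real.sqrt ((B⁻¹.mulVec u) ⬝ᵥ B.mulVec (B⁻¹.mulVec u)) = _
    congr 1
    rw [Matrix.mulVec_mulVec, Matrix.mul_nonsing_inv B hBdet, Matrix.one_mulVec,
      dotProduct_comm]
  calc |u ⬝ᵥ v| = |(B⁻¹.mulVec u) ⬝ᵥ B.mulVec v| := by rw [key]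
    _ ≤ vecBNorm B (B⁻¹.mulVec u) * vecBNorm B v := vecBNorm_cs hB _ _
    _ = Real.sqrt (u ⬝ᵥ B⁻¹.mulVec u) * vecBNorm B v := by rw [hnorm]

lemma cond_bound (hn : 0 < n) (hB : B.PosDef) (x0 : Fin n → ℝ) :
    Real.sqrt (x0 ⬝ᵥ B⁻¹.mulVec x0) * vecBNorm B x0
      ≤ Real.sqrt (condNumber B hB.1) * (x0 ⬝ᵥ x0) := by
  haveI : Nonempty (Fin n) := ⟨⟨0, hn⟩⟩
  have hlmin : 0 < ⨅ i, hB.1.eigenvalues i := inf_eig_pos hn hB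
  have hlmax : 0 < ⨆ i, hB.1.eigenvalues i := by
    obtain ⟨i, hi⟩ := exists_eq_ciSup_of_finite (f := hB.1.eigenvalues)
    rw [← hi]
    exact hB.eigenvalues_pos i
  have hx00 : 0 ≤ x0 ⬝ᵥ x0 := by
    have h : x0 ⬝ᵥ x0 = ∑ i, x0 i * x0 i := rfl
    rw [h]
    exact Finset.sum_nonneg fun i _ => mul_self_nonneg _
  have h1 : x0 ⬝ᵥ B⁻¹.mulVec x0 ≤ (⨅ i, hB.1.eigenvalues i)⁻¹ * (x0 ⬝ᵥ x0) :=
    quad_inv_le hn hB x0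
  have h2 : x0 ⬝ᵥ B.mulVec x0 ≤ (⨆ i, hB.1.eigenvalues i) * (x0 ⬝ᵥ x0) :=
    quad_le_sup hB.1 x0
  calc Real.sqrt (x0 ⬝ᵥ B⁻¹.mulVec x0) * vecBNorm B x0
      ≤ Real.sqrt ((⨅ i, hB.1.eigenvalues i)⁻¹ * (x0 ⬝ᵥ x0))
        * Real.sqrt ((⨆ i, hB.1.eigenvalues i) * (x0 ⬝ᵥ x0)) := by
        apply mul_le_mul (Real.sqrt_le_sqrt h1) (Real.sqrt_le_sqrt h2)
          (Real.sqrt_nonneg _) (Real.sqrt_nonneg _)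
    _ = Real.sqrt (((⨅ i, hB.1.eigenvalues i)⁻¹ * (x0 ⬝ᵥ x0))
          * ((⨆ i, hB.1.eigenvalues i) * (x0 ⬝ᵥ x0))) := by
        rw [← Real.sqrt_mul (by positivity)]
    _ = Real.sqrt (((⨆ i, hB.1.eigenvalues i) / (⨅ i, hB.1.eigenvalues i))
          * ((x0 ⬝ᵥ x0) * (x0 ⬝ᵥ x0))) := by
        congr 1
        field_simp
    _ = Real.sqrt ((⨆ i, hB.1.eigenvalues i) / (⨅ i, hB.1.eigenvalues i))
          * Real.sqrt ((x0 ⬝ᵥ x0) * (x0 ⬝ᵥ x0)) := by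
        rw [Real.sqrt_mul (by positivity)]
    _ = Real.sqrt (condNumber B hB.1) * (x0 ⬝ᵥ x0) := by
        rw [Real.sqrt_mul_self hx00]
        rfl

lemma pow_diff_le {a ρ : ℝ} (hρ0 : 0 ≤ ρ) (hρa : ρ ≤ a) (i : ℕ) :
    a^(i+1) - ρ^(i+1) ≤ ((i:ℝ)+1) * (a - ρ) * a^i := by
  induction i with
  | zero => norm_num
  | succ k ih =>
    have ha0 : 0 ≤ a := hρ0.trans hρa
    have hρk : ρ^(k+1) ≤ a^(k+1) := pow_le_pow_left₀ hρ0 hρa _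
    have h1 : a * (a^(k+1) - ρ^(k+1)) ≤ a * (((k:ℝ)+1) * (a - ρ) * a^k) :=
      mul_le_mul_of_nonneg_left ih ha0
    have h2 : ρ^(k+1) * (a - ρ) ≤ a^(k+1) * (a - ρ) :=
      mul_le_mul_of_nonneg_right hρk (sub_nonneg.2 hρa)
    have e1 : a^(k+1+1) - ρ^(k+1+1) = a * (a^(k+1) - ρ^(k+1)) + ρ^(k+1) * (a - ρ) := by
      ring
    have e2 : a * (((k:ℝ)+1) * (a - ρ) * a^k) + a^(k+1) * (a - ρ)
        = ((k:ℝ)+1+1) * (a - ρ) * a^(k+1) := by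
      ring
    push_cast
    push_cast at h1 h2 e1 e2
    linarith

end MartinAux

open MartinAux in
/-- error of the truncated Martin sums along a `ν`-approximate power sequence for
`R = I - B⁻¹A`, when `A ⪯ B ⪯ κ A`, `κ ≥ 2` and `ν ∈ (0, 1/(2κ))`:
`|Σ_{i=1}^l (1/i) x₀ᵀ Rⁱ x₀ - Σ_{i=1}^l (1/i) x₀ᵀ xᵢ| ≤ 4 ν κ² √(κ(B)) ‖x₀‖²`. -/
theorem approximate_sequence_martin_sum_error
    {n : ℕ} (hn : 0 < n) (A B : Matrix (Fin n) (Fin n) ℝ) (hA : A.PosDef) (hB : B.PosDef)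
    (κ : ℝ) (hκ : 2 ≤ κ)
    (hAB : (B - A).PosSemidef) (hBA : (κ • A - B).PosSemidef)
    (ν : ℝ) (hν : ν ∈ Set.Ioo (0 : ℝ) (1 / (2 * κ)))
    (x0 : Fin n → ℝ) (x : ℕ → Fin n → ℝ) (hstart : x 0 = x0)
    (hx : ∀ k : ℕ,
      vecBNorm B (x (k + 1) - (1 - B⁻¹ * A).mulVec (x k))
        ≤ ν * vecBNorm B ((1 - B⁻¹ * A).mulVec (x k))) :
    ∀ l : ℕ,
      |∑ i ∈ Finset.range l, (1 / (i + 1 : ℝ)) * (x0 ⬝ᵥ ((1 - B⁻¹ * A) ^ (i + 1)).mulVec x0)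
        - ∑ i ∈ Finset.range l, (1 / (i + 1 : ℝ)) * (x0 ⬝ᵥ x (i + 1))|
      ≤ 4 * ν * κ ^ 2 * Real.sqrt (condNumber B hB.1) * (x0 ⬝ᵥ x0) := by
  obtain ⟨hν0, hν2⟩ := hν
  intro l
  have hκ0 : (0:ℝ) < κ := by linarith
  have h2κ : (0:ℝ) < 2 * κ := by linarith
  set R : Matrix (Fin n) (Fin n) ℝ := 1 - B⁻¹ * A with hRdef
  set ρ : ℝ := 1 - κ⁻¹ with hρdef
  set a : ℝ := (1 + ν) * ρ with hadef
  have hκinv : κ * κ⁻¹ = 1 := mul_inv_cancel₀ hκ0.ne'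
  have hκinv2 : κ⁻¹ ≤ 2⁻¹ := inv_anti₀ (by norm_num) hκ
  have hρ0 : 0 ≤ ρ := by rw [hρdef]; norm_num at hκinv2 ⊢; linarith
  have hρ1 : ρ ≤ 1 := by
    have : 0 ≤ κ⁻¹ := inv_nonneg.2 hκ0.le
    rw [hρdef]; linarith
  have hν2' : 2 * κ * ν < 1 := by
    have h := mul_lt_mul_of_pos_right hν2 h2κ
    rw [one_div, inv_mul_cancel₀ h2κ.ne'] at h
    linarith
  have hρa : ρ ≤ a := by rw [hadef]; nlinarith
  have ha0 : 0 ≤ a := by rw [hadef]; nlinarith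
  have h1a : 1 / (2 * κ) ≤ 1 - a := by
    rw [div_le_iff₀ h2κ, hadef, hρdef]
    nlinarith [hκinv, hν2', hν0.le]
  have ha1 : a < 1 := by
    have : 0 < 1 / (2 * κ) := by positivity
    linarith
  have haρ : a - ρ = ν * ρ := by rw [hadef]; ring
  have hNnn : ∀ w, 0 ≤ vecBNorm B w := fun w => Real.sqrt_nonneg _
  have hcontr : ∀ w, vecBNorm B (R.mulVec w) ≤ ρ * vecBNorm B w := fun w =>
    vecBNorm_contract hA hB hκ hAB hBA w
  -- growth bound on the sequence
  have hN1 : ∀ k, vecBNorm B (x k) ≤ a ^ k * vecBNorm B x0 := by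
    intro k
    induction k with
    | zero => simp [hstart]
    | succ k ih =>
      have hdc : x (k+1) = (x (k+1) - R.mulVec (x k)) + R.mulVec (x k) := by
        abel
      calc vecBNorm B (x (k+1))
          ≤ vecBNorm B (x (k+1) - R.mulVec (x k)) + vecBNorm B (R.mulVec (x k)) := by
            conv_lhs => rw [hdc]
            exact vecBNorm_add_le hB _ _
        _ ≤ ν * vecBNorm B (R.mulVec (x k)) + vecBNorm B (R.mulVec (x k)) := by
            linarith [hx k]
        _ = (1 + ν) * vecBNorm B (R.mulVec (x k)) := by ring
        _ ≤ (1 + ν) * (ρ * vecBNorm B (x k)) :=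
            mul_le_mul_of_nonneg_left (hcontr _) (by linarith)
        _ ≤ (1 + ν) * (ρ * (a ^ k * vecBNorm B x0)) :=
            mul_le_mul_of_nonneg_left (mul_le_mul_of_nonneg_left ih hρ0) (by linarith)
        _ = a ^ (k+1) * vecBNorm B x0 := by rw [hadef, pow_succ]; ring
  -- error bound on the sequence
  have hN2 : ∀ k, vecBNorm B (x k - (R ^ k).mulVec x0) ≤ (a ^ k - ρ ^ k) * vecBNorm B x0 := by
    intro k
    induction k with
    | zero =>
      have h0 : x 0 - (R ^ 0).mulVec x0 = 0 := by
        rw [pow_zero, Matrix.one_mulVec, hstart, sub_self]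
      rw [h0]
      have : vecBNorm B (0 : Fin n → ℝ) = 0 := by
        simp [vecBNorm]
      rw [this]
      simp
    | succ k ih =>
      have hdc : x (k+1) - (R ^ (k+1)).mulVec x0
          = (x (k+1) - R.mulVec (x k)) + R.mulVec (x k - (R ^ k).mulVec x0) := by
        rw [Matrix.mulVec_sub, Matrix.mulVec_mulVec, ← pow_succ']
        abel
      calc vecBNorm B (x (k+1) - (R ^ (k+1)).mulVec x0)
          ≤ vecBNorm B (x (k+1) - R.mulVec (x k))
            + vecBNorm B (R.mulVec (x k - (R ^ k).mulVec x0)) := by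
            rw [hdc]
            exact vecBNorm_add_le hB _ _
        _ ≤ ν * vecBNorm B (R.mulVec (x k)) + ρ * vecBNorm B (x k - (R ^ k).mulVec x0) := by
            have := hx k
            have := hcontr (x k - (R ^ k).mulVec x0)
            linarith
        _ ≤ ν * (ρ * vecBNorm B (x k)) + ρ * ((a ^ k - ρ ^ k) * vecBNorm B x0) := by
            have h1 : ν * vecBNorm B (R.mulVec (x k)) ≤ ν * (ρ * vecBNorm B (x k)) :=
              mul_le_mul_of_nonneg_left (hcontr _) hν0.le
            have h2 : ρ * vecBNorm B (x k - (R ^ k).mulVec x0)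
                ≤ ρ * ((a ^ k - ρ ^ k) * vecBNorm B x0) :=
              mul_le_mul_of_nonneg_left ih hρ0
            linarith
        _ ≤ ν * (ρ * (a ^ k * vecBNorm B x0)) + ρ * ((a ^ k - ρ ^ k) * vecBNorm B x0) := by
            have h1 : ν * (ρ * vecBNorm B (x k)) ≤ ν * (ρ * (a ^ k * vecBNorm B x0)) :=
              mul_le_mul_of_nonneg_left (mul_le_mul_of_nonneg_left (hN1 k) hρ0) hν0.le
            linarith
        _ = (a ^ (k+1) - ρ ^ (k+1)) * vecBNorm B x0 := by
            rw [hadef, pow_succ, pow_succ]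
            ring
  -- constants
  have hx00 : 0 ≤ x0 ⬝ᵥ x0 := by
    have h : x0 ⬝ᵥ x0 = ∑ i, x0 i * x0 i := rfl
    rw [h]
    exact Finset.sum_nonneg fun i _ => mul_self_nonneg _
  have hK := cond_bound hn hB x0
  set K : ℝ := Real.sqrt (condNumber B hB.1) * (x0 ⬝ᵥ x0) with hKdef
  have hK0 : 0 ≤ K := mul_nonneg (Real.sqrt_nonneg _) hx00
  -- per-term bound
  have hterm : ∀ i : ℕ,
      |(1 / ((i:ℝ) + 1)) * (x0 ⬝ᵥ (R ^ (i+1)).mulVec x0)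
        - (1 / ((i:ℝ) + 1)) * (x0 ⬝ᵥ x (i+1))| ≤ (a - ρ) * a ^ i * K := by
    intro i
    have hip : (0:ℝ) < (i:ℝ) + 1 := by positivity
    have hip' : (0:ℝ) < 1 / ((i:ℝ) + 1) := by positivity
    have hstep1 : (1 / ((i:ℝ) + 1)) * (x0 ⬝ᵥ (R ^ (i+1)).mulVec x0)
        - (1 / ((i:ℝ) + 1)) * (x0 ⬝ᵥ x (i+1))
        = -((1 / ((i:ℝ) + 1)) * (x0 ⬝ᵥ (x (i+1) - (R ^ (i+1)).mulVec x0))) := by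
      rw [dotProduct_sub]
      ring
    rw [hstep1, abs_neg, abs_mul, abs_of_pos hip']
    have hcs2 : |x0 ⬝ᵥ (x (i+1) - (R ^ (i+1)).mulVec x0)| ≤ (a ^ (i+1) - ρ ^ (i+1)) * K := by
      have hpowle : ρ ^ (i+1) ≤ a ^ (i+1) := pow_le_pow_left₀ hρ0 hρa _
      calc |x0 ⬝ᵥ (x (i+1) - (R ^ (i+1)).mulVec x0)|
          ≤ Real.sqrt (x0 ⬝ᵥ B⁻¹.mulVec x0) * vecBNorm B (x (i+1) - (R ^ (i+1)).mulVec x0) :=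
            mixed_cs hB _ _
        _ ≤ Real.sqrt (x0 ⬝ᵥ B⁻¹.mulVec x0) * ((a ^ (i+1) - ρ ^ (i+1)) * vecBNorm B x0) :=
            mul_le_mul_of_nonneg_left (hN2 (i+1)) (Real.sqrt_nonneg _)
        _ = (a ^ (i+1) - ρ ^ (i+1)) * (Real.sqrt (x0 ⬝ᵥ B⁻¹.mulVec x0) * vecBNorm B x0) := by
            ring
        _ ≤ (a ^ (i+1) - ρ ^ (i+1)) * K :=
            mul_le_mul_of_nonneg_left hK (by linarith)
    have hpd := pow_diff_le hρ0 hρa i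
    have hKnn : 0 ≤ (a ^ (i+1) - ρ ^ (i+1)) :=
      sub_nonneg.2 (pow_le_pow_left₀ hρ0 hρa _)
    calc (1 / ((i:ℝ) + 1)) * |x0 ⬝ᵥ (x (i+1) - (R ^ (i+1)).mulVec x0)|
        ≤ (1 / ((i:ℝ) + 1)) * ((a ^ (i+1) - ρ ^ (i+1)) * K) :=
          mul_le_mul_of_nonneg_left hcs2 hip'.le
      _ ≤ (1 / ((i:ℝ) + 1)) * ((((i:ℝ)+1) * (a - ρ) * a ^ i) * K) :=
          mul_le_mul_of_nonneg_left (mul_le_mul_of_nonneg_right hpd hK0) hip'.le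
      _ = (a - ρ) * a ^ i * K * (((i:ℝ)+1) * (1 / ((i:ℝ) + 1))) := by ring
      _ = (a - ρ) * a ^ i * K := by
          rw [mul_one_div_cancel hip.ne', mul_one]
  -- sum up
  have hsum : |∑ i ∈ Finset.range l, (1 / ((i:ℝ) + 1)) * (x0 ⬝ᵥ (R ^ (i+1)).mulVec x0)
      - ∑ i ∈ Finset.range l, (1 / ((i:ℝ) + 1)) * (x0 ⬝ᵥ x (i+1))|
      ≤ ∑ i ∈ Finset.range l, (a - ρ) * a ^ i * K := by
    rw [← Finset.sum_sub_distrib]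
    exact (Finset.abs_sum_le_sum_abs _ _).trans (Finset.sum_le_sum fun i _ => hterm i)
  have h1a' : (0:ℝ) < 1 - a := lt_of_lt_of_le (by positivity) h1a
  have hG : ∑ i ∈ Finset.range l, a ^ i ≤ (1 - a)⁻¹ := by
    rw [geom_sum_eq ha1.ne l]
    have hrw : (a ^ l - 1) / (a - 1) = (1 - a ^ l) / (1 - a) := by
      rw [← neg_div_neg_eq]
      ring_nf
    rw [hrw, ← one_div]
    have hle : 1 - a ^ l ≤ 1 := by nlinarith [pow_nonneg ha0 l]
    exact div_le_div_of_nonneg_right hle h1a'.le |>.trans_eq rfl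
  have hG0 : 0 ≤ ∑ i ∈ Finset.range l, a ^ i :=
    Finset.sum_nonneg fun i _ => pow_nonneg ha0 _
  have hinv2κ : (1 - a)⁻¹ ≤ 2 * κ := by
    rw [← one_div]
    calc 1 / (1 - a) ≤ 1 / (1 / (2 * κ)) :=
          one_div_le_one_div_of_le (by positivity) h1a
      _ = 2 * κ := by rw [one_div_one_div]
  have hsum2 : ∑ i ∈ Finset.range l, (a - ρ) * a ^ i * K
      = (a - ρ) * K * ∑ i ∈ Finset.range l, a ^ i := by
    rw [Finset.mul_sum]
    exact Finset.sum_congr rfl fun i _ => by ring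
  have hc0 : 0 ≤ a - ρ := sub_nonneg.2 hρa
  have hcν : a - ρ ≤ ν := by rw [haρ]; nlinarith
  have hfinal : (a - ρ) * K * ∑ i ∈ Finset.range l, a ^ i ≤ 4 * ν * κ ^ 2 * K := by
    have hGb : ∑ i ∈ Finset.range l, a ^ i ≤ 2 * κ := hG.trans hinv2κ
    have step1 : (a - ρ) * K * ∑ i ∈ Finset.range l, a ^ i ≤ (a - ρ) * K * (2 * κ) :=
      mul_le_mul_of_nonneg_left hGb (mul_nonneg hc0 hK0)
    have step2 : (a - ρ) * K * (2 * κ) ≤ ν * K * (2 * κ) :=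
      mul_le_mul_of_nonneg_right (mul_le_mul_of_nonneg_right hcν hK0) h2κ.le
    have step3 : ν * K * (2 * κ) ≤ 4 * ν * κ ^ 2 * K := by
      nlinarith [mul_nonneg (mul_nonneg hν0.le hκ0.le) hK0]
    linarith
  calc |∑ i ∈ Finset.range l, (1 / ((i:ℝ) + 1)) * (x0 ⬝ᵥ (R ^ (i+1)).mulVec x0)
      - ∑ i ∈ Finset.range l, (1 / ((i:ℝ) + 1)) * (x0 ⬝ᵥ x (i+1))|
      ≤ ∑ i ∈ Finset.range l, (a - ρ) * a ^ i * K := hsum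
    _ = (a - ρ) * K * ∑ i ∈ Finset.range l, a ^ i := hsum2
    _ ≤ 4 * ν * κ ^ 2 * K := hfinal
    _ = 4 * ν * κ ^ 2 * Real.sqrt (condNumber B hB.1) * (x0 ⬝ᵥ x0) := by
        rw [hKdef]
        ring
end

section
/- Let A and B be real symmetric positive definite n×n matrices with A ⪯ B ⪯ κ·A for some κ ≥ 2, let R = I − B^{−1}A, and let ε > 0. Suppose ν ≤ min( ε/(8·κ²·√(κ(B))), 1/(2κ) ), and for j = 1, …, p let (x_{i,j})_{i≥0} be a ν-approximate power sequence for R in the B-norm whose start vector x_{0,j} has unit Euclidean norm. Then for every l ∈ ℕ, the averaged estimator z_{p,l} = (1/p)·Σ_{j=1}^p Σ_{i=1}^l (1/i)·x_{0,j}ᵀ x_{i,j} satisfies | z_{p,l} − (1/p)·Σ_{j=1}^p Σ_{i=1}^l (1/i)·x_{0,j}ᵀ R^i x_{0,j} | ≤ 4·ν·κ²·√(κ(B)) ≤ ε/2. -/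
open Matrix

section auxHelpers

variable {n : ℕ}

lemma dp_nonneg' {M : Matrix (Fin n) (Fin n) ℝ} (hM : M.PosSemidef) (x : Fin n → ℝ) :
    0 ≤ x ⬝ᵥ M *ᵥ x := by simpa using hM.dotProduct_mulVec_nonneg x

lemma dp_symm' {M : Matrix (Fin n) (Fin n) ℝ} (hM : M.IsHermitian) (u v : Fin n → ℝ) :
    u ⬝ᵥ M *ᵥ v = v ⬝ᵥ M *ᵥ u := by
  rw [dotProduct_mulVec, ← mulVec_transpose, ← conjTranspose_eq_transpose_of_trivial,
    hM.eq, dotProduct_comm]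

lemma dp_cs' {M : Matrix (Fin n) (Fin n) ℝ} (hM : M.PosSemidef) (u v : Fin n → ℝ) :
    (u ⬝ᵥ M *ᵥ v) ^ 2 ≤ (u ⬝ᵥ M *ᵥ u) * (v ⬝ᵥ M *ᵥ v) := by
  have h : ∀ t : ℝ, 0 ≤ (v ⬝ᵥ M *ᵥ v) * (t * t) + (2 * (u ⬝ᵥ M *ᵥ v)) * t + u ⬝ᵥ M *ᵥ u := by
    intro t
    have hs := dp_symm' hM.1 u v
    have h0 := dp_nonneg' hM (u + t • v)
    have he : (u + t • v) ⬝ᵥ M *ᵥ (u + t • v)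
        = (v ⬝ᵥ M *ᵥ v) * (t * t) + (2 * (u ⬝ᵥ M *ᵥ v)) * t + u ⬝ᵥ M *ᵥ u := by
      simp only [mulVec_add, mulVec_smul, dotProduct_add, add_dotProduct, dotProduct_smul,
        smul_dotProduct, smul_eq_mul]
      rw [hs]; ring
    linarith [he ▸ h0]
  have := discrim_le_zero h
  simp only [discrim] at this
  nlinarith [this]

lemma dp_decomp' [Nonempty (Fin n)] {B : Matrix (Fin n) (Fin n) ℝ} (hB : B.IsHermitian)
    (x : Fin n → ℝ) :
    x ⬝ᵥ B *ᵥ x = ∑ i, hB.eigenvalues i *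
      ((star (hB.eigenvectorUnitary : Matrix (Fin n) (Fin n) ℝ) *ᵥ x) i) ^ 2 ∧
    x ⬝ᵥ x = ∑ i, ((star (hB.eigenvectorUnitary : Matrix (Fin n) (Fin n) ℝ) *ᵥ x) i) ^ 2 := by
  set U : Matrix (Fin n) (Fin n) ℝ := (hB.eigenvectorUnitary : Matrix (Fin n) (Fin n) ℝ) with hU
  have hUU : U * star U = 1 := Matrix.mem_unitaryGroup_iff.mp hB.eigenvectorUnitary.2
  set y := star U *ᵥ x with hy
  have hxu : ∀ w : Fin n → ℝ, x ⬝ᵥ U *ᵥ w = y ⬝ᵥ w := by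
    intro w
    rw [dotProduct_mulVec, hy, star_eq_conjTranspose, conjTranspose_eq_transpose_of_trivial,
      mulVec_transpose]
  constructor
  · conv_lhs => rw [hB.spectral_theorem, Unitary.conjStarAlgAut_apply]
    rw [← mulVec_mulVec, ← mulVec_mulVec, hxu]
    rw [RCLike.ofReal_real_eq_id]
    simp only [Function.id_comp, dotProduct, mulVec_diagonal]
    exact Finset.sum_congr rfl fun i _ => by ring
  · have : x ⬝ᵥ x = x ⬝ᵥ (U * star U) *ᵥ x := by rw [hUU, one_mulVec]
    rw [this, ← mulVec_mulVec, hxu]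
    simp only [dotProduct]
    exact Finset.sum_congr rfl fun i _ => by ring

lemma rayleigh_upper' [Nonempty (Fin n)] {B : Matrix (Fin n) (Fin n) ℝ} (hB : B.IsHermitian)
    (x : Fin n → ℝ) :
    x ⬝ᵥ B *ᵥ x ≤ (⨆ i, hB.eigenvalues i) * (x ⬝ᵥ x) := by
  obtain ⟨h1, h2⟩ := dp_decomp' hB x
  rw [h1, h2, Finset.mul_sum]
  refine Finset.sum_le_sum fun i _ => ?_
  exact mul_le_mul_of_nonneg_right
    (le_ciSup (Set.Finite.bddAbove (Set.finite_range _)) i) (sq_nonneg _)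

lemma rayleigh_lower' [Nonempty (Fin n)] {B : Matrix (Fin n) (Fin n) ℝ} (hB : B.IsHermitian)
    (x : Fin n → ℝ) :
    (⨅ i, hB.eigenvalues i) * (x ⬝ᵥ x) ≤ x ⬝ᵥ B *ᵥ x := by
  obtain ⟨h1, h2⟩ := dp_decomp' hB x
  rw [h1, h2, Finset.mul_sum]
  refine Finset.sum_le_sum fun i _ => ?_
  exact mul_le_mul_of_nonneg_right
    (ciInf_le (Set.Finite.bddBelow (Set.finite_range _)) i) (sq_nonneg _)

lemma vecBNorm_nonneg' (B : Matrix (Fin n) (Fin n) ℝ) (x : Fin n → ℝ) : 0 ≤ vecBNorm B x :=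
  Real.sqrt_nonneg _

lemma vecBNorm_triangle' {B : Matrix (Fin n) (Fin n) ℝ} (hB : B.PosSemidef) (u v : Fin n → ℝ) :
    vecBNorm B (u + v) ≤ vecBNorm B u + vecBNorm B v := by
  unfold vecBNorm
  have hcs : u ⬝ᵥ B *ᵥ v ≤ Real.sqrt (u ⬝ᵥ B *ᵥ u) * Real.sqrt (v ⬝ᵥ B *ᵥ v) := by
    have h1 := dp_cs' hB u v
    calc u ⬝ᵥ B *ᵥ v ≤ |u ⬝ᵥ B *ᵥ v| := le_abs_self _
      _ = Real.sqrt ((u ⬝ᵥ B *ᵥ v) ^ 2) := (Real.sqrt_sq_eq_abs _).symm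
      _ ≤ Real.sqrt ((u ⬝ᵥ B *ᵥ u) * (v ⬝ᵥ B *ᵥ v)) := Real.sqrt_le_sqrt h1
      _ = _ := Real.sqrt_mul (dp_nonneg' hB u) _
  have hexp : (u + v) ⬝ᵥ B *ᵥ (u + v)
      ≤ (Real.sqrt (u ⬝ᵥ B *ᵥ u) + Real.sqrt (v ⬝ᵥ B *ᵥ v)) ^ 2 := by
    have hs := dp_symm' hB.1 u v
    have e1 : (u + v) ⬝ᵥ B *ᵥ (u + v) = u ⬝ᵥ B *ᵥ u + 2 * (u ⬝ᵥ B *ᵥ v) + v ⬝ᵥ B *ᵥ v := by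
      simp only [mulVec_add, dotProduct_add, add_dotProduct]
      rw [hs]; ring
    have s1 := Real.sq_sqrt (dp_nonneg' hB u)
    have s2 := Real.sq_sqrt (dp_nonneg' hB v)
    nlinarith [hcs]
  calc Real.sqrt ((u + v) ⬝ᵥ B *ᵥ (u + v))
      ≤ Real.sqrt ((Real.sqrt (u ⬝ᵥ B *ᵥ u) + Real.sqrt (v ⬝ᵥ B *ᵥ v)) ^ 2) :=
        Real.sqrt_le_sqrt hexp
    _ = _ := by rw [Real.sqrt_sq (by positivity)]

lemma contraction_bnorm' {A B : Matrix (Fin n) (Fin n) ℝ} (hA : A.PosDef) (hB : B.PosDef)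
    (κ : ℝ) (hκ : 2 ≤ κ)
    (hAB : (B - A).PosSemidef) (hBA : (κ • A - B).PosSemidef) (v : Fin n → ℝ) :
    vecBNorm B ((1 - B⁻¹ * A) *ᵥ v) ≤ (1 - 1/κ) * vecBNorm B v := by
  have hκ0 : (0:ℝ) < κ := lt_of_lt_of_le two_pos hκ
  set ρ : ℝ := 1 - 1/κ with hρdef
  have hρ0 : 0 ≤ ρ := by
    have : 1/κ ≤ 1/2 := by
      apply one_div_le_one_div_of_le <;> linarith
    rw [hρdef]; linarith
  set R : Matrix (Fin n) (Fin n) ℝ := 1 - B⁻¹ * A with hR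
  set M : Matrix (Fin n) (Fin n) ℝ := B - A with hM
  have hMH : M.IsHermitian := hB.1.sub hA.1
  have hBR : B * R = M := by
    rw [hR, hM, mul_sub, mul_one, ← mul_assoc,
      Matrix.mul_nonsing_inv _ (isUnit_iff_ne_zero.mpr hB.det_pos.ne'), one_mul]
  have hMle : ∀ u : Fin n → ℝ, u ⬝ᵥ M *ᵥ u ≤ ρ * (u ⬝ᵥ B *ᵥ u) := by
    intro u
    have h1 := dp_nonneg' hBA u
    have h2 : u ⬝ᵥ (κ • A - B) *ᵥ u = κ * (u ⬝ᵥ A *ᵥ u) - u ⬝ᵥ B *ᵥ u := by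
      simp only [sub_mulVec, smul_mulVec, dotProduct_sub, dotProduct_smul, smul_eq_mul]
    have h3 : u ⬝ᵥ M *ᵥ u = u ⬝ᵥ B *ᵥ u - u ⬝ᵥ A *ᵥ u := by
      simp only [hM, sub_mulVec, dotProduct_sub]
    rw [h2] at h1
    have hinv : 1/κ * κ = 1 := one_div_mul_cancel hκ0.ne'
    have h4 : 0 ≤ 1/κ * (κ * (u ⬝ᵥ A *ᵥ u) - u ⬝ᵥ B *ᵥ u) :=
      mul_nonneg (by positivity) h1
    have h4' : 0 ≤ u ⬝ᵥ A *ᵥ u - 1/κ * (u ⬝ᵥ B *ᵥ u) := by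
      rw [mul_sub, ← mul_assoc, hinv, one_mul] at h4; exact h4
    rw [h3, hρdef]
    nlinarith [h4']
  set d : ℝ := (R *ᵥ v) ⬝ᵥ B *ᵥ (R *ᵥ v) with hd
  have hd0 : 0 ≤ d := dp_nonneg' hB.posSemidef _
  have hdM : d = v ⬝ᵥ M *ᵥ (R *ᵥ v) := by
    rw [hd, mulVec_mulVec, hBR, dp_symm' hMH]
  have hcs := dp_cs' (hAB) v (R *ᵥ v)
  have hb1 : v ⬝ᵥ M *ᵥ v ≤ ρ * (v ⬝ᵥ B *ᵥ v) := hMle v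
  have hb2 : (R *ᵥ v) ⬝ᵥ M *ᵥ (R *ᵥ v) ≤ ρ * d := hMle (R *ᵥ v)
  have hdle : d ≤ ρ^2 * (v ⬝ᵥ B *ᵥ v) := by
    rcases eq_or_lt_of_le hd0 with h | h
    · rw [← h]; exact mul_nonneg (sq_nonneg ρ) (dp_nonneg' hB.posSemidef v)
    · have key : d * d ≤ (ρ^2 * (v ⬝ᵥ B *ᵥ v)) * d := by
        have h5 : d^2 ≤ (v ⬝ᵥ M *ᵥ v) * ((R *ᵥ v) ⬝ᵥ M *ᵥ (R *ᵥ v)) := by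
          rw [hdM]; exact hcs
        nlinarith [dp_nonneg' hAB v, dp_nonneg' hAB (R *ᵥ v), dp_nonneg' hB.posSemidef v]
      exact le_of_mul_le_mul_right key h
  calc vecBNorm B (R *ᵥ v) = Real.sqrt d := rfl
    _ ≤ Real.sqrt (ρ^2 * (v ⬝ᵥ B *ᵥ v)) := Real.sqrt_le_sqrt hdle
    _ = ρ * vecBNorm B v := by
        rw [Real.sqrt_mul (sq_nonneg ρ), Real.sqrt_sq hρ0]; rfl

lemma aux_pow' (ν : ℝ) (hν : 0 ≤ ν) (m : ℕ) : (1+ν)^m - 1 ≤ m * ν * (1+ν)^m := by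
  induction m with
  | zero => simp
  | succ k ih =>
    have h1 : (1:ℝ) ≤ (1+ν)^(k+1) := one_le_pow₀ (by linarith)
    have h2 : (0:ℝ) ≤ (1+ν)^k := by positivity
    have e : (1+ν)^(k+1) = (1+ν)^k * (1+ν) := pow_succ _ _
    have hmul := mul_le_mul_of_nonneg_left ih (by linarith : (0:ℝ) ≤ 1+ν)
    have h3 : ν ≤ ν * (1+ν)^(k+1) := by nlinarith [mul_le_mul_of_nonneg_left h1 hν]
    push_cast
    rw [e] at h3 ⊢
    nlinarith [hmul, h3, h2]

end auxHelpers

set_option maxHeartbeats 2000000 in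
/-- deterministic error of the averaged estimator built from `p` unit-norm
`ν`-approximate power sequences for `R = I - B⁻¹A`, with
`ν ≤ min(ε/(8κ²√(κ(B))), 1/(2κ))`: the deviation is at most `4νκ²√(κ(B)) ≤ ε/2`. -/
theorem averaged_approximate_sequence_error
    {n p : ℕ} (hn : 0 < n) (A B : Matrix (Fin n) (Fin n) ℝ) (hA : A.PosDef) (hB : B.PosDef)
    (κ : ℝ) (hκ : 2 ≤ κ) (ε : ℝ) (hε : 0 < ε)
    (hAB : (B - A).PosSemidef) (hBA : (κ • A - B).PosSemidef)
    (ν : ℝ) (hν0 : 0 < ν)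
    (hν : ν ≤ min (ε / (8 * κ ^ 2 * Real.sqrt (condNumber B hB.1))) (1 / (2 * κ)))
    (x : Fin p → ℕ → Fin n → ℝ)
    (hunit : ∀ j, Real.sqrt (x j 0 ⬝ᵥ x j 0) = 1)
    (hx : ∀ j, ∀ k : ℕ,
      vecBNorm B (x j (k + 1) - (1 - B⁻¹ * A).mulVec (x j k))
        ≤ ν * vecBNorm B ((1 - B⁻¹ * A).mulVec (x j k))) :
    ∀ l : ℕ,
      |(1 / p : ℝ) * ∑ j : Fin p, ∑ i ∈ Finset.range l, (1 / (i + 1 : ℝ)) * (x j 0 ⬝ᵥ x j (i + 1))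
        - (1 / p : ℝ) * ∑ j : Fin p, ∑ i ∈ Finset.range l,
            (1 / (i + 1 : ℝ)) * (x j 0 ⬝ᵥ ((1 - B⁻¹ * A) ^ (i + 1)).mulVec (x j 0))|
        ≤ 4 * ν * κ ^ 2 * Real.sqrt (condNumber B hB.1) ∧
      4 * ν * κ ^ 2 * Real.sqrt (condNumber B hB.1) ≤ ε / 2 := by
  intro l
  haveI : Nonempty (Fin n) := Fin.pos_iff_nonempty.mp hn
  have hκ0 : (0:ℝ) < κ := by linarith
  set R : Matrix (Fin n) (Fin n) ℝ := 1 - B⁻¹ * A with hRdef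
  set ρ : ℝ := 1 - 1/κ with hρdef
  have hκinv : 0 < 1/κ := by positivity
  have hκinv2 : 1/κ ≤ 1/2 := by apply one_div_le_one_div_of_le <;> linarith
  have hρ0 : (0:ℝ) ≤ ρ := by rw [hρdef]; linarith
  have hρ1 : ρ < 1 := by rw [hρdef]; linarith
  have hcon : ∀ v, vecBNorm B (R *ᵥ v) ≤ ρ * vecBNorm B v := fun v =>
    contraction_bnorm' hA hB κ hκ hAB hBA v
  -- eigenvalue facts
  set lmin : ℝ := ⨅ i, hB.1.eigenvalues i with hlmin
  set lmax : ℝ := ⨆ i, hB.1.eigenvalues i with hlmax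
  have hlminpos : 0 < lmin := by
    obtain ⟨i0, hi0⟩ := Finite.exists_min hB.1.eigenvalues
    have heq : lmin = hB.1.eigenvalues i0 :=
      le_antisymm (ciInf_le (Set.Finite.bddBelow (Set.finite_range _)) i0) (le_ciInf hi0)
    rw [heq]; exact hB.eigenvalues_pos i0
  have hminmax : lmin ≤ lmax := by
    obtain ⟨i⟩ := (inferInstance : Nonempty (Fin n))
    exact le_trans (ciInf_le (Set.Finite.bddBelow (Set.finite_range _)) i)
      (le_ciSup (Set.Finite.bddAbove (Set.finite_range _)) i)
  have hlmaxpos : 0 < lmax := lt_of_lt_of_le hlminpos hminmax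
  have hcond : condNumber B hB.1 = lmax / lmin := rfl
  set s : ℝ := Real.sqrt (condNumber B hB.1) with hsdef
  have hcondpos : 0 < condNumber B hB.1 := by rw [hcond]; positivity
  have hs0 : 0 < s := Real.sqrt_pos.mpr hcondpos
  -- second part
  have part2 : 4 * ν * κ ^ 2 * s ≤ ε / 2 := by
    have h := (le_min_iff.mp hν).1
    have h8 : 0 < 8 * κ^2 * s := by positivity
    rw [le_div_iff₀ h8] at h
    nlinarith [h, hs0.le, hκ0]
  refine ⟨?_, part2⟩
  have hν2 : ν ≤ 1/(2*κ) := (le_min_iff.mp hν).2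
  set r : ℝ := ρ * (1 + ν) with hrdef
  have hr0 : 0 ≤ r := mul_nonneg hρ0 (by linarith)
  have hrle : r ≤ 1 - 1/(2*κ) := by
    have h1 : 1/(2*κ) = (1/2) * (1/κ) := by
      rw [one_div_mul_one_div]
    rw [hrdef, hρdef]
    nlinarith [hν2, hκinv, hκinv2, hν0.le]
  have hr1 : r < 1 := by
    have : 0 < 1/(2*κ) := by positivity
    linarith
  -- error sequence bounds
  have herr : ∀ j : Fin p, ∀ k : ℕ,
      vecBNorm B (x j k - (R ^ k) *ᵥ x j 0)
          ≤ ρ^k * ((1+ν)^k - 1) * vecBNorm B (x j 0) ∧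
      vecBNorm B ((R ^ k) *ᵥ x j 0) ≤ ρ^k * vecBNorm B (x j 0) := by
    intro j k
    induction k with
    | zero =>
      constructor
      · simp only [pow_zero, one_mulVec, sub_self]
        have : vecBNorm B (0 : Fin n → ℝ) = 0 := by
          unfold vecBNorm; simp
        rw [this]
        simp
      · simp [pow_zero, one_mulVec]
    | succ k ih =>
      obtain ⟨ihE, ihP⟩ := ih
      set c : ℝ := vecBNorm B (x j 0) with hc
      have hc0 : 0 ≤ c := vecBNorm_nonneg' B _
      set ek : Fin n → ℝ := x j k - (R ^ k) *ᵥ x j 0 with hek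
      have hEk0 : 0 ≤ vecBNorm B ek := vecBNorm_nonneg' B _
      have hpowvec : (R ^ (k+1)) *ᵥ x j 0 = R *ᵥ ((R ^ k) *ᵥ x j 0) := by
        rw [mulVec_mulVec, ← pow_succ']
      have hP : vecBNorm B ((R ^ (k+1)) *ᵥ x j 0) ≤ ρ^(k+1) * c := by
        rw [hpowvec]
        calc vecBNorm B (R *ᵥ ((R ^ k) *ᵥ x j 0)) ≤ ρ * vecBNorm B ((R ^ k) *ᵥ x j 0) := hcon _
          _ ≤ ρ * (ρ^k * c) := mul_le_mul_of_nonneg_left ihP hρ0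
          _ = ρ^(k+1) * c := by ring
      refine ⟨?_, hP⟩
      have hsplit : x j (k+1) - (R ^ (k+1)) *ᵥ x j 0
          = (x j (k+1) - R *ᵥ x j k) + R *ᵥ ek := by
        rw [hek, mulVec_sub, hpowvec]; abel
      have hxk : vecBNorm B (x j k) ≤ ρ^k * c + vecBNorm B ek := by
        have hdecomp : x j k = (R ^ k) *ᵥ x j 0 + ek := by rw [hek]; abel
        calc vecBNorm B (x j k) = vecBNorm B ((R ^ k) *ᵥ x j 0 + ek) := by rw [← hdecomp]
          _ ≤ vecBNorm B ((R ^ k) *ᵥ x j 0) + vecBNorm B ek :=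
              vecBNorm_triangle' hB.posSemidef _ _
          _ ≤ ρ^k * c + vecBNorm B ek := by linarith [ihP]
      have hRxk : vecBNorm B (R *ᵥ x j k) ≤ ρ * (ρ^k * c + vecBNorm B ek) :=
        (hcon _).trans (mul_le_mul_of_nonneg_left hxk hρ0)
      have htri : vecBNorm B (x j (k+1) - (R ^ (k+1)) *ᵥ x j 0)
          ≤ vecBNorm B (x j (k+1) - R *ᵥ x j k) + vecBNorm B (R *ᵥ ek) := by
        rw [hsplit]; exact vecBNorm_triangle' hB.posSemidef _ _
      have h1 : vecBNorm B (x j (k+1) - R *ᵥ x j k) ≤ ν * (ρ * (ρ^k * c + vecBNorm B ek)) :=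
        (hx j k).trans (mul_le_mul_of_nonneg_left hRxk hν0.le)
      have h2 : vecBNorm B (R *ᵥ ek) ≤ ρ * vecBNorm B ek := hcon _
      have hIH := ihE
      have hpk : (0:ℝ) ≤ ρ^k := pow_nonneg hρ0 k
      calc vecBNorm B (x j (k+1) - (R ^ (k+1)) *ᵥ x j 0)
          ≤ ν * (ρ * (ρ^k * c + vecBNorm B ek)) + ρ * vecBNorm B ek := by linarith [htri, h1, h2]
        _ ≤ ν * (ρ * (ρ^k * c + ρ^k * ((1+ν)^k - 1) * c)) + ρ * (ρ^k * ((1+ν)^k - 1) * c) := by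
            have hd : 0 ≤ ρ^k * ((1+ν)^k - 1) * c - vecBNorm B ek := sub_nonneg.mpr hIH
            nlinarith [mul_nonneg (mul_nonneg hν0.le hρ0) hd, mul_nonneg hρ0 hd]
        _ = ρ^(k+1) * ((1+ν)^(k+1) - 1) * c := by ring
  -- per-term scalar bound
  have hterm : ∀ j : Fin p, ∀ i : ℕ,
      |x j 0 ⬝ᵥ x j (i+1) - x j 0 ⬝ᵥ (R ^ (i+1)) *ᵥ x j 0|
        ≤ s * (ρ^(i+1) * ((1+ν)^(i+1) - 1)) := by
    intro j i
    set m : ℕ := i + 1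
    set e : Fin n → ℝ := x j m - (R ^ m) *ᵥ x j 0 with he
    set t : ℝ := ρ^m * ((1+ν)^m - 1) with ht
    have ht0 : 0 ≤ t := by
      apply mul_nonneg (pow_nonneg hρ0 m)
      have : (1:ℝ) ≤ (1+ν)^m := one_le_pow₀ (by linarith)
      linarith
    have hx0nn : 0 ≤ x j 0 ⬝ᵥ x j 0 := by
      have := dp_cs' (Matrix.PosSemidef.one (n := Fin n) (R := ℝ)) (x j 0) (x j 0)
      simpa using dp_nonneg' (Matrix.PosSemidef.one (n := Fin n) (R := ℝ)) (x j 0)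
    have hx0 : x j 0 ⬝ᵥ x j 0 = 1 := by
      have h := hunit j
      have := Real.sq_sqrt hx0nn
      rw [h] at this
      simpa using this.symm
    have hdot : x j 0 ⬝ᵥ x j m - x j 0 ⬝ᵥ (R ^ m) *ᵥ x j 0 = x j 0 ⬝ᵥ e := by
      rw [he, dotProduct_sub]
    have hcs : (x j 0 ⬝ᵥ e)^2 ≤ e ⬝ᵥ e := by
      have h := dp_cs' (Matrix.PosSemidef.one (n := Fin n) (R := ℝ)) (x j 0) e
      simp only [one_mulVec] at h
      rw [hx0, one_mul] at h
      exact h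
    have hEk := (herr j m).1
    have hcle : vecBNorm B (x j 0) ≤ Real.sqrt lmax := by
      unfold vecBNorm
      apply Real.sqrt_le_sqrt
      calc x j 0 ⬝ᵥ B *ᵥ x j 0 ≤ lmax * (x j 0 ⬝ᵥ x j 0) := rayleigh_upper' hB.1 _
        _ = lmax := by rw [hx0, mul_one]
    have hBe : vecBNorm B e ≤ t * Real.sqrt lmax := by
      calc vecBNorm B e ≤ t * vecBNorm B (x j 0) := hEk
        _ ≤ t * Real.sqrt lmax := mul_le_mul_of_nonneg_left hcle ht0
    have heBe : e ⬝ᵥ B *ᵥ e ≤ t^2 * lmax := by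
      have h1 : e ⬝ᵥ B *ᵥ e = (vecBNorm B e)^2 :=
        (Real.sq_sqrt (dp_nonneg' hB.posSemidef e)).symm
      have h2 : (vecBNorm B e)^2 ≤ (t * Real.sqrt lmax)^2 :=
        pow_le_pow_left₀ (vecBNorm_nonneg' B e) hBe 2
      have h3 : (t * Real.sqrt lmax)^2 = t^2 * lmax := by
        rw [mul_pow, Real.sq_sqrt hlmaxpos.le]
      rw [h1]; rw [h3] at h2; exact h2
    have hee : e ⬝ᵥ e ≤ t^2 * lmax / lmin := by
      have h2 := rayleigh_lower' hB.1 e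
      rw [le_div_iff₀ hlminpos]
      calc (e ⬝ᵥ e) * lmin = lmin * (e ⬝ᵥ e) := by ring
        _ ≤ e ⬝ᵥ B *ᵥ e := h2
        _ ≤ t^2 * lmax := heBe
    have habs : |x j 0 ⬝ᵥ e| ≤ Real.sqrt (t^2 * lmax / lmin) := by
      rw [← Real.sqrt_sq_eq_abs]
      exact Real.sqrt_le_sqrt (hcs.trans hee)
    have hsqrt : Real.sqrt (t^2 * lmax / lmin) = t * s := by
      rw [mul_div_assoc, Real.sqrt_mul (sq_nonneg t), Real.sqrt_sq ht0, hsdef, hcond]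
    rw [hdot]
    calc |x j 0 ⬝ᵥ e| ≤ Real.sqrt (t^2 * lmax / lmin) := habs
      _ = t * s := hsqrt
      _ = s * t := by ring
  -- summation bound per sequence
  have hsum : ∀ j : Fin p,
      ∑ i ∈ Finset.range l, (1 / (i + 1 : ℝ))
        * |x j 0 ⬝ᵥ x j (i+1) - x j 0 ⬝ᵥ (R ^ (i+1)) *ᵥ x j 0|
      ≤ 4 * ν * κ ^ 2 * s := by
    intro j
    have hstep : ∀ i ∈ Finset.range l, (1 / (i + 1 : ℝ))
        * |x j 0 ⬝ᵥ x j (i+1) - x j 0 ⬝ᵥ (R ^ (i+1)) *ᵥ x j 0|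
        ≤ s * (ν * r^(i+1)) := by
      intro i _
      have hm0 : (0:ℝ) < (i:ℝ) + 1 := by positivity
      have h1 : (1 / (i + 1 : ℝ)) * |x j 0 ⬝ᵥ x j (i+1) - x j 0 ⬝ᵥ (R ^ (i+1)) *ᵥ x j 0|
          ≤ (1 / (i + 1 : ℝ)) * (s * (ρ^(i+1) * ((1+ν)^(i+1) - 1))) :=
        mul_le_mul_of_nonneg_left (hterm j i) (by positivity)
      have h2 : ρ^(i+1) * ((1+ν)^(i+1) - 1) ≤ ((i:ℝ)+1) * (ν * r^(i+1)) := by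
        have ha := aux_pow' ν hν0.le (i+1)
        have hpk : (0:ℝ) ≤ ρ^(i+1) := pow_nonneg hρ0 _
        have hb := mul_le_mul_of_nonneg_left ha hpk
        calc ρ^(i+1) * ((1+ν)^(i+1) - 1) ≤ ρ^(i+1) * (((i:ℕ)+1 : ℕ) * ν * (1+ν)^(i+1)) := hb
          _ = ((i:ℝ)+1) * (ν * (ρ * (1+ν))^(i+1)) := by
              push_cast
              rw [mul_pow]
              ring
          _ = ((i:ℝ)+1) * (ν * r^(i+1)) := by rw [hrdef]
      have h3 : (1 / (i + 1 : ℝ)) * (s * (ρ^(i+1) * ((1+ν)^(i+1) - 1)))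
          ≤ (1 / (i + 1 : ℝ)) * (s * (((i:ℝ)+1) * (ν * r^(i+1)))) := by
        apply mul_le_mul_of_nonneg_left _ (by positivity)
        exact mul_le_mul_of_nonneg_left h2 hs0.le
      have h4 : (1 / (i + 1 : ℝ)) * (s * (((i:ℝ)+1) * (ν * r^(i+1)))) = s * (ν * r^(i+1)) := by
        field_simp
      linarith [h1, h3, h4.le]
    have hgeom : ∑ i ∈ Finset.range l, r^(i+1) ≤ 2*κ := by
      have hsum0 : ∑ i ∈ Finset.range l, r^i ≤ 1/(1-r) := by
        rw [geom_sum_eq (ne_of_lt hr1)]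
        have heq : (r^l - 1)/(r-1) = (1 - r^l)/(1-r) := by
          rw [← neg_div_neg_eq]; ring_nf
        rw [heq]
        have h1r : 0 < 1 - r := by linarith
        have hnum : 1 - r^l ≤ 1 := by nlinarith [pow_nonneg hr0 l]
        gcongr
      have hsum1 : 1/(1-r) ≤ 2*κ := by
        have h2κ : 0 < 1/(2*κ) := by positivity
        have h1r2 : 1/(2*κ) ≤ 1 - r := by linarith [hrle]
        calc 1/(1-r) ≤ 1/(1/(2*κ)) := one_div_le_one_div_of_le h2κ h1r2
          _ = 2*κ := one_div_one_div _
      have hmulsum : ∑ i ∈ Finset.range l, r^(i+1) = r * ∑ i ∈ Finset.range l, r^i := by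
        rw [Finset.mul_sum]
        exact Finset.sum_congr rfl fun i _ => pow_succ' r i
      rw [hmulsum]
      have hsumnn : 0 ≤ ∑ i ∈ Finset.range l, r^i :=
        Finset.sum_nonneg fun i _ => pow_nonneg hr0 i
      calc r * ∑ i ∈ Finset.range l, r^i ≤ 1 * (1/(1-r)) :=
            mul_le_mul (le_of_lt hr1) hsum0 hsumnn zero_le_one
        _ = 1/(1-r) := one_mul _
        _ ≤ 2*κ := hsum1
    calc ∑ i ∈ Finset.range l, (1 / (i + 1 : ℝ))
            * |x j 0 ⬝ᵥ x j (i+1) - x j 0 ⬝ᵥ (R ^ (i+1)) *ᵥ x j 0|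
        ≤ ∑ i ∈ Finset.range l, s * (ν * r^(i+1)) := Finset.sum_le_sum hstep
      _ = s * ν * ∑ i ∈ Finset.range l, r^(i+1) := by
          rw [Finset.mul_sum]
          exact Finset.sum_congr rfl fun i _ => by ring
      _ ≤ s * ν * (2*κ) := mul_le_mul_of_nonneg_left hgeom (by positivity)
      _ ≤ 4 * ν * κ ^ 2 * s := by
          have hq : 2*κ ≤ 4*κ^2 := by nlinarith
          nlinarith [mul_le_mul_of_nonneg_left hq (mul_nonneg hν0.le hs0.le)]
  -- final assembly
  rcases Nat.eq_zero_or_pos p with hp | hp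
  · subst hp
    simp only [Finset.univ_eq_empty, Finset.sum_empty, mul_zero, sub_zero, abs_zero]
    positivity
  · have hp0 : (0:ℝ) < p := by exact_mod_cast hp
    have hdiff : (1 / p : ℝ) * (∑ j : Fin p, ∑ i ∈ Finset.range l,
          (1 / (i + 1 : ℝ)) * (x j 0 ⬝ᵥ x j (i + 1)))
        - (1 / p : ℝ) * (∑ j : Fin p, ∑ i ∈ Finset.range l,
          (1 / (i + 1 : ℝ)) * (x j 0 ⬝ᵥ (R ^ (i + 1)) *ᵥ x j 0))
        = (1 / p : ℝ) * ∑ j : Fin p, ∑ i ∈ Finset.range l,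
          (1 / (i + 1 : ℝ)) * (x j 0 ⬝ᵥ x j (i + 1) - x j 0 ⬝ᵥ (R ^ (i + 1)) *ᵥ x j 0) := by
      rw [← mul_sub, ← Finset.sum_sub_distrib]
      congr 1
      refine Finset.sum_congr rfl fun j _ => ?_
      rw [← Finset.sum_sub_distrib]
      exact Finset.sum_congr rfl fun i _ => by ring
    rw [hdiff, abs_mul, abs_of_nonneg (by positivity : (0:ℝ) ≤ (1 / p : ℝ))]
    have habs : |∑ j : Fin p, ∑ i ∈ Finset.range l,
          (1 / (i + 1 : ℝ)) * (x j 0 ⬝ᵥ x j (i + 1) - x j 0 ⬝ᵥ (R ^ (i + 1)) *ᵥ x j 0)|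
        ≤ ∑ _j : Fin p, (4 * ν * κ ^ 2 * s) := by
      refine (Finset.abs_sum_le_sum_abs _ _).trans (Finset.sum_le_sum fun j _ => ?_)
      calc |∑ i ∈ Finset.range l,
              (1 / (i + 1 : ℝ)) * (x j 0 ⬝ᵥ x j (i + 1) - x j 0 ⬝ᵥ (R ^ (i + 1)) *ᵥ x j 0)|
          ≤ ∑ i ∈ Finset.range l,
              |(1 / (i + 1 : ℝ)) * (x j 0 ⬝ᵥ x j (i + 1) - x j 0 ⬝ᵥ (R ^ (i + 1)) *ᵥ x j 0)| :=
            Finset.abs_sum_le_sum_abs _ _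
        _ = ∑ i ∈ Finset.range l, (1 / (i + 1 : ℝ))
              * |x j 0 ⬝ᵥ x j (i+1) - x j 0 ⬝ᵥ (R ^ (i+1)) *ᵥ x j 0| :=
            Finset.sum_congr rfl fun i _ => by
              rw [abs_mul, abs_of_nonneg (by positivity : (0:ℝ) ≤ (1 / (i + 1 : ℝ)))]
        _ ≤ 4 * ν * κ ^ 2 * s := hsum j
    calc (1 / p : ℝ) * |∑ j : Fin p, ∑ i ∈ Finset.range l,
            (1 / (i + 1 : ℝ)) * (x j 0 ⬝ᵥ x j (i + 1) - x j 0 ⬝ᵥ (R ^ (i + 1)) *ᵥ x j 0)|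
        ≤ (1 / p : ℝ) * ∑ _j : Fin p, (4 * ν * κ ^ 2 * s) :=
          mul_le_mul_of_nonneg_left habs (by positivity)
      _ = (1 / p : ℝ) * (p * (4 * ν * κ ^ 2 * s)) := by
          rw [Finset.sum_const, Finset.card_univ, Fintype.card_fin, nsmul_eq_mul]
      _ = 4 * ν * κ ^ 2 * s := by field_simp
end
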